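/- Let f: ℝ^{d₁} × ℝ^{d₂} → ℝ be continuous. Then (x*,y*) is a local minimax point of f if and only if y* is a local maximum of f(x*,·) and there exists ε₀ > 0 such that for every ε ∈ (0, ε₀], x* is a local minimum of the function g_ε defined by g_ε(x) := max_{y : ‖y−y*‖ ≤ ε} f(x,y). -/

import Mathlib

open Metric Filter Set

noncomputable section

/-- `(xs, ys)` is a local minimax point of `f`: there are `δ₀ > 0` and
`h : (0, δ₀] → [0, ∞)` with `h(δ) → 0` as `δ → 0` such that for all
`δ ∈ (0, δ₀]` and all `(x, y)` with `‖x - xs‖ ≤ δ`, `‖y - ys‖ ≤ δ`,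
`f xs y ≤ f xs ys ≤ max_{‖y' - ys‖ ≤ h δ} f x y'`. -/
def IsLocalMinimax {d₁ d₂ : ℕ}
    (f : EuclideanSpace ℝ (Fin d₁) → EuclideanSpace ℝ (Fin d₂) → ℝ)
    (xs : EuclideanSpace ℝ (Fin d₁)) (ys : EuclideanSpace ℝ (Fin d₂)) : Prop :=
  ∃ δ₀ > (0 : ℝ), ∃ h : ℝ → ℝ,
    (∀ δ ∈ Set.Ioc (0 : ℝ) δ₀, 0 ≤ h δ) ∧
    Tendsto h (nhdsWithin 0 (Set.Ioi 0)) (nhds 0) ∧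
    ∀ δ ∈ Set.Ioc (0 : ℝ) δ₀, ∀ x y,
      ‖x - xs‖ ≤ δ → ‖y - ys‖ ≤ δ →
        f xs y ≤ f xs ys ∧ f xs ys ≤ sSup (f x '' closedBall ys (h δ))

/-- For continuous `f`, `(xs, ys)` is a local minimax point iff `ys` is a local
maximum of `f xs ·` and there is `ε₀ > 0` such that for every `ε ∈ (0, ε₀]`,
`xs` is a local minimum of `g_ε (x) := max_{‖y - ys‖ ≤ ε} f x y`. -/
theorem stmt_5 {d₁ d₂ : ℕ}
    (f : EuclideanSpace ℝ (Fin d₁) → EuclideanSpace ℝ (Fin d₂) → ℝ)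
    (hf : Continuous
      (fun p : EuclideanSpace ℝ (Fin d₁) × EuclideanSpace ℝ (Fin d₂) => f p.1 p.2))
    (xs : EuclideanSpace ℝ (Fin d₁)) (ys : EuclideanSpace ℝ (Fin d₂)) :
    IsLocalMinimax f xs ys ↔
      (IsLocalMax (f xs) ys ∧
        ∃ ε₀ > (0 : ℝ), ∀ ε ∈ Set.Ioc (0 : ℝ) ε₀,
          IsLocalMin (fun x => sSup (f x '' closedBall ys ε)) xs) := by
  have hfx : ∀ x : EuclideanSpace ℝ (Fin d₁), Continuous (f x) := fun x =>
    hf.comp (continuous_const.prodMk continuous_id)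
  have hbdd : ∀ (x : EuclideanSpace ℝ (Fin d₁)) (ε : ℝ),
      BddAbove (f x '' closedBall ys ε) :=
    fun x ε => (isCompact_closedBall ys ε).bddAbove_image (hfx x).continuousOn
  have hmem : ∀ (x : EuclideanSpace ℝ (Fin d₁)) (ε : ℝ), 0 ≤ ε →
      f x ys ∈ f x '' closedBall ys ε :=
    fun x ε hε => ⟨ys, mem_closedBall_self hε, rfl⟩
  have hle : ∀ (x : EuclideanSpace ℝ (Fin d₁)) (ε : ℝ), 0 ≤ ε →
      f x ys ≤ sSup (f x '' closedBall ys ε) :=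
    fun x ε hε => le_csSup (hbdd x ε) (hmem x ε hε)
  constructor
  · rintro ⟨δ₀, hδ₀, hfun, hpos, htend, hmm⟩
    have hmax : IsLocalMax (f xs) ys := by
      filter_upwards [closedBall_mem_nhds ys hδ₀] with y hy
      exact (hmm δ₀ ⟨hδ₀, le_refl _⟩ xs y (by simp [hδ₀.le]) (mem_closedBall_iff_norm.mp hy)).1
    refine ⟨hmax, δ₀, hδ₀, fun ε hε => ?_⟩
    have hgxs : sSup (f xs '' closedBall ys ε) = f xs ys := by
      refine le_antisymm (csSup_le ⟨_, hmem xs ε hε.1.le⟩ ?_) (hle xs ε hε.1.le)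
      rintro a ⟨y, hy, rfl⟩
      exact (hmm δ₀ ⟨hδ₀, le_refl _⟩ xs y (by simp [hδ₀.le])
        (le_trans (mem_closedBall_iff_norm.mp hy) hε.2)).1
    have hev : ∀ᶠ δ in nhdsWithin 0 (Set.Ioi 0),
        hfun δ < ε ∧ δ ∈ Set.Ioc (0:ℝ) δ₀ :=
      (htend.eventually_lt_const hε.1).and (Ioc_mem_nhdsGT_of_mem ⟨le_refl 0, hδ₀⟩)
    obtain ⟨δ, hδε, hδIoc⟩ := hev.exists
    rw [IsLocalMin, IsMinFilter]
    filter_upwards [closedBall_mem_nhds xs hδIoc.1] with x hx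
    calc sSup (f xs '' closedBall ys ε) = f xs ys := hgxs
      _ ≤ sSup (f x '' closedBall ys (hfun δ)) :=
        (hmm δ hδIoc x ys (mem_closedBall_iff_norm.mp hx) (by simp [hδIoc.1.le])).2
      _ ≤ sSup (f x '' closedBall ys ε) :=
        csSup_le_csSup (hbdd x ε) ⟨_, hmem x (hfun δ) (hpos δ hδIoc)⟩
          (image_mono (closedBall_subset_closedBall hδε.le))
  · rintro ⟨hmax, ε₀, hε₀, hmin⟩
    obtain ⟨r, hr, hballmax⟩ := Metric.eventually_nhds_iff_ball.mp hmax
    have key : ∀ n : ℕ, ∃ ρ > 0, ∀ x, ‖x - xs‖ ≤ ρ →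
        f xs ys ≤ sSup (f x '' closedBall ys (ε₀ / (n + 1))) := by
      intro n
      have hεn : (0:ℝ) < ε₀ / (n + 1) := by positivity
      have hεn' : ε₀ / (n + 1) ≤ ε₀ := by
        rw [div_le_iff₀ (by positivity)]
        nlinarith [Nat.cast_nonneg (α := ℝ) n]
      obtain ⟨ρ, hρ0, hb⟩ := Metric.eventually_nhds_iff_ball.mp (hmin _ ⟨hεn, hεn'⟩)
      refine ⟨ρ / 2, by positivity, fun x hx => ?_⟩
      have hx' : x ∈ ball xs ρ := mem_ball_iff_norm.mpr (lt_of_le_of_lt hx (by linarith))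
      exact le_trans (hle xs _ hεn.le) (hb x hx')
    choose ρ hρ0 hρ using key
    set ρ' : ℕ → ℝ := fun n =>
      min ((Finset.range (n+1)).inf' (by simp) ρ) (1 / (n + 1)) with hρ'def
    have hρ'pos : ∀ n, 0 < ρ' n := by
      intro n
      refine lt_min (Finset.lt_inf'_iff _ |>.mpr fun i _ => hρ0 i) (by positivity)
    have hρ'le : ∀ n, ρ' n ≤ ρ n := fun n =>
      le_trans (min_le_left _ _) (Finset.inf'_le ρ (Finset.mem_range.mpr (Nat.lt_succ_self n)))
    have hρ'anti : Antitone ρ' := by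
      refine antitone_nat_of_succ_le fun n => ?_
      refine min_le_min ?_ ?_
      · exact Finset.le_inf' _ _ fun b hb =>
          Finset.inf'_le ρ (Finset.mem_range.mpr (lt_of_lt_of_le (Finset.mem_range.mp hb) (Nat.le_succ _)))
      · rw [div_le_div_iff₀ (by positivity) (by positivity)]
        push_cast; nlinarith
    have hρ'small : ∀ n, ρ' n ≤ 1 / (n + 1) := fun n => min_le_right _ _
    -- set of indices
    have hSne : ∀ δ : ℝ, 0 < δ → {n : ℕ | ρ' n < δ}.Nonempty := by
      intro δ hδ
      obtain ⟨N, hN⟩ := exists_nat_one_div_lt hδ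
      exact ⟨N, lt_of_le_of_lt (hρ'small N) (by exact_mod_cast hN)⟩
    set m : ℝ → ℕ := fun δ => sInf {n : ℕ | ρ' n < δ} with hmdef
    set hh : ℝ → ℝ := fun δ => ε₀ / (m δ) with hhdef
    refine ⟨min (ρ' 0) (r / 2), lt_min (hρ'pos 0) (by linarith), hh, ?_, ?_, ?_⟩
    · intro δ _
      exact div_nonneg hε₀.le (Nat.cast_nonneg _)
    · rw [Metric.tendsto_nhds]
      intro η hη
      obtain ⟨N, hN⟩ := exists_nat_gt (ε₀ / η)
      have hNpos : ε₀ / (N + 1) < η := by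
        rw [div_lt_iff₀ (by positivity)]
        rw [div_lt_iff₀ hη] at hN
        nlinarith
      have hmemIoc : Set.Ioc (0:ℝ) (ρ' N) ∈ nhdsWithin (0:ℝ) (Set.Ioi 0) :=
        Ioc_mem_nhdsGT_of_mem ⟨le_refl 0, hρ'pos N⟩
      filter_upwards [hmemIoc] with δ hδ
      have hmgt : N + 1 ≤ m δ := by
        refine le_csInf (hSne δ hδ.1) fun k hk => ?_
        by_contra hcon
        push_neg at hcon
        have : δ ≤ ρ' k := le_trans hδ.2 (hρ'anti (Nat.lt_succ_iff.mp hcon))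
        exact absurd hk (not_lt.mpr this)
      have hhnn : 0 ≤ hh δ := div_nonneg hε₀.le (Nat.cast_nonneg _)
      have : hh δ ≤ ε₀ / (N + 1) := by
        apply div_le_div_of_nonneg_left hε₀.le (by positivity)
        exact_mod_cast hmgt
      rw [Real.dist_eq, sub_zero, abs_of_nonneg hhnn]
      exact lt_of_le_of_lt this hNpos
    · intro δ hδ x y hx hy
      have hδ0 : 0 < δ := hδ.1
      have hδρ : δ ≤ ρ' 0 := le_trans hδ.2 (min_le_left _ _)
      have hδr : δ ≤ r / 2 := le_trans hδ.2 (min_le_right _ _)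
      constructor
      · exact hballmax y (mem_ball_iff_norm.mpr (lt_of_le_of_lt hy (by linarith)))
      · have hmmem : ρ' (m δ) < δ := Nat.sInf_mem (hSne δ hδ0)
        have hm1 : 1 ≤ m δ := by
          rcases Nat.eq_zero_or_pos (m δ) with h0 | h1
          · rw [h0] at hmmem
            exact absurd hδρ (not_le.mpr hmmem)
          · exact h1
        have hpred : δ ≤ ρ' (m δ - 1) := by
          have : m δ - 1 ∉ {n : ℕ | ρ' n < δ} :=
            Nat.notMem_of_lt_sInf (Nat.sub_lt (lt_of_lt_of_le Nat.zero_lt_one hm1) Nat.zero_lt_one)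
          exact not_lt.mp this
        have hcast : (m δ : ℝ) = ((m δ - 1 : ℕ) : ℝ) + 1 := by
          have := Nat.succ_pred_eq_of_pos (lt_of_lt_of_le Nat.zero_lt_one hm1)
          exact_mod_cast (congrArg (Nat.cast (R := ℝ)) this.symm)
        have hxρ : ‖x - xs‖ ≤ ρ (m δ - 1) :=
          le_trans hx (le_trans hpred (hρ'le _))
        have := hρ (m δ - 1) x hxρ
        rw [hhdef]
        simpa [hcast] using this
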